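/- arXiv:math/0606003 — 2 statements merged into one kernel-verified Lean document; each statement's English description precedes it below -/
import Mathlib

section
/- For any nonzero integer D, the set of integer solutions (u,v) to u^3 + v^3 = D is finite. -/
theorem cube_sum_finite (D : ℤ) (hD : D ≠ 0) :
    {p : ℤ × ℤ | p.1 ^ 3 + p.2 ^ 3 = D}.Finite := by
  apply Set.Finite.subset ((Set.finite_Icc (-(2*|D|)) (2*|D|)).prod
    (Set.finite_Icc (-(2*|D|)) (2*|D|)))
  rintro ⟨u, v⟩ hp
  simp only [Set.mem_setOf_eq] at hp
  have hfac : (u + v) * (u^2 - u*v + v^2) = D := by linear_combination hp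
  have hs : u + v ≠ 0 := by
    intro h
    apply hD
    rw [← hfac, h, zero_mul]
  have hq : 0 ≤ u^2 - u*v + v^2 := by nlinarith [sq_nonneg (u - v), sq_nonneg (u + v)]
  have habs : |u + v| ≥ 1 := Int.one_le_abs hs
  have hDabs : |D| = |u + v| * (u^2 - u*v + v^2) := by
    rw [← hfac, abs_mul, abs_of_nonneg hq]
  have hkey : u^2 - u*v + v^2 ≤ |D| := by nlinarith
  have h2 : u^2 + v^2 ≤ 2 * |D| := by nlinarith [sq_nonneg (u - v)]
  have hDpos : (1:ℤ) ≤ |D| := Int.one_le_abs hD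
  constructor <;> constructor <;> nlinarith [sq_nonneg u, sq_nonneg v, sq_nonneg (u-1), sq_nonneg (u+1), sq_nonneg (v-1), sq_nonneg (v+1)]
end

section
/- For integers c, d not both zero, the cubic polynomial (c+d)X^3 + (3c-6d)X^2 + (3d-6c)X + (c+d) has no repeated complex roots (equivalently, it is separable as a polynomial over ℚ, when it is nonconstant). -/
open Polynomial in
theorem cubic_no_repeated_roots (c d : ℤ) (h : ¬(c = 0 ∧ d = 0)) :
    ∀ z : ℂ, ¬((X - C z) ^ 2 ∣
      (C ((c : ℂ) + d) * X ^ 3 + C (3 * (c : ℂ) - 6 * d) * X ^ 2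
        + C (3 * (d : ℂ) - 6 * c) * X + C ((c : ℂ) + d))) := by
  intro z hdvd
  obtain ⟨q, hq⟩ := hdvd
  have hE1 : ((c : ℂ) + d) * z ^ 3 + (3 * (c : ℂ) - 6 * d) * z ^ 2
      + (3 * (d : ℂ) - 6 * c) * z + ((c : ℂ) + d) = 0 := by
    have := congrArg (eval z) hq
    simpa using this
  have hE2 : 3 * ((c : ℂ) + d) * z ^ 2 + 2 * (3 * (c : ℂ) - 6 * d) * z
      + (3 * (d : ℂ) - 6 * c) = 0 := by
    have := congrArg (fun p => eval z (derivative p)) hq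
    simp [derivative_mul, derivative_pow] at this
    linear_combination this
  set a : ℂ := (c : ℂ) + d with ha
  set b : ℂ := 3 * (c : ℂ) - 6 * d with hb
  set e : ℂ := 3 * (d : ℂ) - 6 * c with he
  have key : ((c : ℂ) ^ 2 - c * d + d ^ 2) ^ 2 = 0 := by
    have hDR : (3 * (-6*a^2*e + 2*a*b^2) * z + (27*a^3 + 4*b^3 - 15*a*b*e))
          * (a * z ^ 3 + b * z ^ 2 + e * z + a)
        + (-(-6*a^2*e + 2*a*b^2) * z^2 + (-9*a^3 - 2*b^3 + 7*a*b*e) * z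
            + (4*a*e^2 - b^2*e - 3*a^2*b))
          * (3 * a * z ^ 2 + 2 * b * z + e)
        = -729 * ((c : ℂ) ^ 2 - c * d + d ^ 2) ^ 2 := by
      rw [ha, hb, he]; ring
    rw [hE1, hE2] at hDR
    have : (-729 : ℂ) * ((c : ℂ) ^ 2 - c * d + d ^ 2) ^ 2 = 0 := by
      linear_combination -hDR
    have h729 : (-729 : ℂ) ≠ 0 := by norm_num
    exact (mul_eq_zero.mp this).resolve_left h729
  have hz : (c : ℤ) ^ 2 - c * d + d ^ 2 = 0 := by
    have : ((c : ℂ) ^ 2 - c * d + d ^ 2) = 0 := pow_eq_zero_iff (n := 2) (by norm_num) |>.mp key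
    exact_mod_cast this
  have hc : c = 0 ∧ d = 0 := by
    constructor <;> nlinarith [sq_nonneg (c - d), sq_nonneg c, sq_nonneg d, sq_nonneg (c + d)]
  exact h hc
end
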